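/- Let K be an infinite field, and let F ∈ K(x₁,…,x_l, z₁,…,z_r) be a rational function such that for all (t₁,…,t_l) ∈ (K^×)^l one has F(t₁x₁,…,t_lx_l, z₁,…,z_r) = t_i · F(x₁,…,x_l, z₁,…,z_r) for a fixed index i. Then F = h(z₁,…,z_r)·x_i for some rational function h ∈ K(z₁,…,z_r). -/

import Mathlib

open MvPolynomial

namespace Stmt12Aux

variable {K : Type*} [Field K] {l r : ℕ}

/-- scaling coefficients -/
def cf (t : Fin l → Kˣ) : Fin l ⊕ Fin r → K :=
  Sum.elim (fun j => (t j : K)) fun _ => 1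

lemma cf_mul (t t' : Fin l → Kˣ) (s : Fin l ⊕ Fin r) :
    cf (t * t') s = cf t s * cf t' s := by cases s <;> simp [cf]

lemma cf_one (s : Fin l ⊕ Fin r) : cf (K := K) (1 : Fin l → Kˣ) s = 1 := by
  cases s <;> simp [cf]

/-- the scaling algebra endomorphism -/
noncomputable def Φ (t : Fin l → Kˣ) :
    MvPolynomial (Fin l ⊕ Fin r) K →ₐ[K] MvPolynomial (Fin l ⊕ Fin r) K :=
  aeval fun s => C (cf t s) * X s

lemma Φ_X (t : Fin l → Kˣ) (s : Fin l ⊕ Fin r) :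
    Φ t (X s) = C (cf t s) * X s := aeval_X _ s

lemma Φ_comp (t t' : Fin l → Kˣ) :
    (Φ (r := r) t).comp (Φ t') = Φ (t * t') := by
  apply algHom_ext
  intro s
  simp [Φ, cf_mul, mul_comm, mul_left_comm, map_mul]

lemma Φ_one : (Φ (K := K) (l := l) (r := r) 1) = AlgHom.id K _ := by
  apply algHom_ext
  intro s
  simp [Φ, cf_one]

/-- the scaling algebra automorphism -/
noncomputable def ΦE (t : Fin l → Kˣ) :
    MvPolynomial (Fin l ⊕ Fin r) K ≃ₐ[K] MvPolynomial (Fin l ⊕ Fin r) K :=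
  AlgEquiv.ofAlgHom (Φ t) (Φ t⁻¹)
    (by rw [Φ_comp, mul_inv_cancel, Φ_one]) (by rw [Φ_comp, inv_mul_cancel, Φ_one])

lemma Φ_monomial (t : Fin l → Kˣ) (m : (Fin l ⊕ Fin r) →₀ ℕ) (k : K) :
    Φ t (monomial m k) = C (m.prod fun s n => cf t s ^ n) * monomial m k := by
  rw [Φ, aeval_monomial, monomial_eq]
  simp only [Finsupp.prod, mul_pow, Finset.prod_mul_distrib, ← map_pow, ← map_prod,
    algebraMap_eq]
  ring

/-- the multihomogeneous component of multidegree `d` (in the `x`-variables) -/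
noncomputable def comp' (d : Fin l →₀ ℕ) (p : MvPolynomial (Fin l ⊕ Fin r) K) :
    MvPolynomial (Fin l ⊕ Fin r) K :=
  rename Sum.inr (coeff d (sumAlgEquiv K (Fin l) (Fin r) p)) *
    monomial (d.mapDomain Sum.inl) 1

lemma E_rename_inr (c : MvPolynomial (Fin r) K) :
    sumAlgEquiv K (Fin l) (Fin r) (rename Sum.inr c) = C c := by
  have := AlgHom.congr_fun (sumAlgEquiv_comp_rename_inr K (Fin l) (Fin r)) c
  simpa [algebraMap_eq] using this

lemma E_comp' (d : Fin l →₀ ℕ) (p : MvPolynomial (Fin l ⊕ Fin r) K) :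
    sumAlgEquiv K (Fin l) (Fin r) (comp' d p) =
      monomial d (coeff d (sumAlgEquiv K (Fin l) (Fin r) p)) := by
  rw [comp', map_mul, E_rename_inr]
  have h1 : (monomial (d.mapDomain Sum.inl) (1 : K) :
      MvPolynomial (Fin l ⊕ Fin r) K) = rename Sum.inl (monomial d 1) := by
    rw [rename_monomial]
  have h2 := AlgHom.congr_fun (sumAlgEquiv_comp_rename_inl K (Fin l) (Fin r)) (monomial d (1 : K))
  simp only [AlgHom.coe_comp, Function.comp_apply, AlgEquiv.toAlgHom_eq_coe,
    AlgHom.coe_coe, AlgEquiv.toAlgHom_apply, AlgEquiv.coe_toAlgHom] at h2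
  have h3 : (mapAlgHom (Algebra.ofId K (MvPolynomial (Fin r) K))) ((monomial d) (1:K)) =
      monomial d (1 : MvPolynomial (Fin r) K) := by
    simp [mapAlgHom_apply, map_monomial]
  rw [h1, h2, h3, C_mul_monomial, mul_one]

lemma comp'_sum (p : MvPolynomial (Fin l ⊕ Fin r) K) (T : Finset (Fin l →₀ ℕ))
    (hT : (sumAlgEquiv K (Fin l) (Fin r) p).support ⊆ T) :
    ∑ d ∈ T, comp' d p = p := by
  apply (sumAlgEquiv K (Fin l) (Fin r)).injective
  rw [map_sum]
  simp only [E_comp']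
  rw [← Finset.sum_subset hT (fun d _ hd => by
    rw [notMem_support_iff.mp hd, monomial_zero])]
  exact support_sum_monomial_coeff _

lemma comp'_eq_zero {d : Fin l →₀ ℕ} {p : MvPolynomial (Fin l ⊕ Fin r) K}
    (hd : d ∉ (sumAlgEquiv K (Fin l) (Fin r) p).support) : comp' d p = 0 := by
  rw [comp', notMem_support_iff.mp hd, map_zero, zero_mul]

/-- the character weight -/
def w (t : Fin l → Kˣ) (d : Fin l →₀ ℕ) : K := ∏ j : Fin l, (t j : K) ^ d j

lemma w_one (d : Fin l →₀ ℕ) : w (K := K) 1 d = 1 := by simp [w]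

lemma w_mul (t t' : Fin l → Kˣ) (d : Fin l →₀ ℕ) : w (t * t') d = w t d * w t' d := by
  simp only [w]
  rw [← Finset.prod_mul_distrib]
  exact Finset.prod_congr rfl fun j _ => by simp [mul_pow]

lemma w_add (t : Fin l → Kˣ) (d e : Fin l →₀ ℕ) : w t (d + e) = w t d * w t e := by
  simp only [w]
  rw [← Finset.prod_mul_distrib]
  exact Finset.prod_congr rfl fun j _ => by simp [pow_add]

lemma w_single (t : Fin l → Kˣ) (i : Fin l) : w t (Finsupp.single i 1) = t i := by
  rw [w]
  rw [Finset.prod_eq_single i (fun j _ hj => by simp [Finsupp.single_apply, Ne.symm hj])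
    (by simp)]
  simp

lemma w_update (u : Kˣ) (j : Fin l) (d : Fin l →₀ ℕ) :
    w (Function.update 1 j u) d = (u : K) ^ d j := by
  rw [w]
  rw [Finset.prod_eq_single j (fun j' _ hj' => by simp [Function.update_of_ne hj'])
    (by simp)]
  simp

lemma Φ_rename (t : Fin l → Kˣ) (c : MvPolynomial (Fin r) K) :
    Φ t (rename Sum.inr c) = rename Sum.inr c := by
  have h : (Φ (r := r) t).comp (rename Sum.inr) = rename Sum.inr := by
    apply algHom_ext
    intro j
    simp [Φ, cf]
  exact AlgHom.congr_fun h c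

lemma Φ_comp' (t : Fin l → Kˣ) (d : Fin l →₀ ℕ) (p : MvPolynomial (Fin l ⊕ Fin r) K) :
    Φ t (comp' d p) = C (w t d) * comp' d p := by
  rw [comp', map_mul, Φ_rename, Φ_monomial]
  have h : ((d.mapDomain Sum.inl).prod fun s n => cf (r := r) t s ^ n) = w t d := by
    rw [Finsupp.prod_mapDomain_index_inj Sum.inl_injective,
      Finsupp.prod_fintype _ _ (fun j => pow_zero _)]
    rfl
  rw [h]
  ring

lemma exists_pow_ne [Infinite K] {a b : ℕ} (hab : a ≠ b) :
    ∃ u : Kˣ, (u : K) ^ a ≠ (u : K) ^ b := by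
  by_contra hc
  push_neg at hc
  have aux : ∀ a b : ℕ, a < b → (∀ u : Kˣ, (u : K) ^ a = (u : K) ^ b) → False := by
    intro a b hlt hu
    have hn : 0 < b - a := Nat.sub_pos_of_lt hlt
    have hroot : {x : K | x ≠ 0} ⊆
        {x : K | (Polynomial.X ^ (b - a) - Polynomial.C 1 : Polynomial K).IsRoot x} := by
      intro x hx
      have h1 := hu (Units.mk0 x hx)
      simp only [Units.val_mk0] at h1
      have hb : x ^ b = x ^ a * x ^ (b - a) := by
        rw [← pow_add, Nat.add_sub_cancel' hlt.le]
      have hx1 : x ^ (b - a) = 1 := by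
        apply mul_left_cancel₀ (pow_ne_zero a hx)
        rw [← hb, ← h1, mul_one]
      simp [Polynomial.IsRoot, hx1]
    have hfin := Polynomial.finite_setOf_isRoot
      (Polynomial.X_pow_sub_C_ne_zero hn (1 : K))
    have hinf : ({x : K | x ≠ 0}).Infinite := by
      have h2 := (Set.finite_singleton (0 : K)).infinite_compl
      have h3 : ({0}ᶜ : Set K) = {x : K | x ≠ 0} := by ext x; simp
      rwa [h3] at h2
    exact hinf (hfin.subset hroot)
  rcases lt_or_gt_of_ne hab with h | h
  · exact aux a b h hc
  · exact aux b a h fun u => (hc u).symm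

lemma extract {L : Type*} [Field L] [Infinite K] (ψ : K →+* L)
    (S : Finset (Fin l →₀ ℕ)) (g : (Fin l →₀ ℕ) → L)
    (hg : ∀ t : Fin l → Kˣ, ∑ d ∈ S, g d * ψ (w t d) = 0) :
    ∀ d ∈ S, g d = 0 := by
  classical
  let χ : (Fin l →₀ ℕ) → ((Fin l → Kˣ) →* L) := fun d =>
    { toFun := fun t => ψ (w t d)
      map_one' := by simp [w_one]
      map_mul' := fun t t' => by
        show ψ (w (t * t') d) = ψ (w t d) * ψ (w t' d)
        rw [w_mul, map_mul] }
  have hinj : Function.Injective χ := by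
    intro d d' hdd'
    by_contra hne
    obtain ⟨j, hj⟩ := Finsupp.ne_iff.mp hne
    obtain ⟨u, hu⟩ := exists_pow_ne (K := K) hj
    apply hu
    have h4 := DFunLike.congr_fun hdd' (Function.update (1 : Fin l → Kˣ) j u)
    simp only [χ, MonoidHom.coe_mk, OneHom.coe_mk] at h4
    rw [w_update, w_update] at h4
    exact ψ.injective h4
  have li : LinearIndependent L (fun d => ⇑(χ d)) :=
    (linearIndependent_monoidHom (Fin l → Kˣ) L).comp χ hinj
  refine linearIndependent_iff'.mp li S g ?_
  funext t
  simp only [Finset.sum_apply, Pi.smul_apply, smul_eq_mul, Pi.zero_apply]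
  exact hg t

end Stmt12Aux

open Stmt12Aux in
/-- If a rational function `F ∈ K(x₁,…,x_l,z₁,…,z_r)` over an infinite field `K` satisfies
`F(t₁x₁,…,t_lx_l,z) = t_i · F(x,z)` for all `t ∈ (Kˣ)^l` (a fixed index `i`), then
`F = h(z) · x_i` for some rational function `h ∈ K(z₁,…,z_r)`. -/
theorem stmt12 {K : Type*} [Field K] [Infinite K] (l r : ℕ) (i : Fin l)
    (F : FractionRing (MvPolynomial (Fin l ⊕ Fin r) K))
    (h : ∀ t : Fin l → Kˣ,
      ∀ σ : FractionRing (MvPolynomial (Fin l ⊕ Fin r) K) ≃+*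
            FractionRing (MvPolynomial (Fin l ⊕ Fin r) K),
        (∀ c : K, σ (algebraMap (MvPolynomial (Fin l ⊕ Fin r) K) _ (MvPolynomial.C c)) =
            algebraMap (MvPolynomial (Fin l ⊕ Fin r) K) _ (MvPolynomial.C c)) →
        (∀ j : Fin l, σ (algebraMap (MvPolynomial (Fin l ⊕ Fin r) K) _
              (MvPolynomial.X (Sum.inl j))) =
            algebraMap (MvPolynomial (Fin l ⊕ Fin r) K) _
              (MvPolynomial.C (t j : K) * MvPolynomial.X (Sum.inl j))) →
        (∀ j : Fin r, σ (algebraMap (MvPolynomial (Fin l ⊕ Fin r) K) _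
              (MvPolynomial.X (Sum.inr j))) =
            algebraMap (MvPolynomial (Fin l ⊕ Fin r) K) _ (MvPolynomial.X (Sum.inr j))) →
        σ F = algebraMap (MvPolynomial (Fin l ⊕ Fin r) K) _ (MvPolynomial.C (t i : K)) * F) :
    ∃ p q : MvPolynomial (Fin r) K, q ≠ 0 ∧
      algebraMap (MvPolynomial (Fin l ⊕ Fin r) K) _ (MvPolynomial.rename Sum.inr q) * F =
      algebraMap (MvPolynomial (Fin l ⊕ Fin r) K) _
        (MvPolynomial.rename Sum.inr p * MvPolynomial.X (Sum.inl i)) := by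
  classical
  set f := algebraMap (MvPolynomial (Fin l ⊕ Fin r) K)
    (FractionRing (MvPolynomial (Fin l ⊕ Fin r) K)) with hfdef
  have finj : Function.Injective f := IsFractionRing.injective _ _
  obtain ⟨⟨a, b⟩, hab⟩ :=
    IsLocalization.surj (nonZeroDivisors (MvPolynomial (Fin l ⊕ Fin r) K)) F
  have hb0 : (b : MvPolynomial (Fin l ⊕ Fin r) K) ≠ 0 := nonZeroDivisors.ne_zero b.2
  -- the functional equation at the polynomial level
  have key : ∀ t : Fin l → Kˣ,
      Φ t a * (b : MvPolynomial (Fin l ⊕ Fin r) K) = C ((t i : K)) * (a * Φ t b) := by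
    intro t
    set σ : FractionRing (MvPolynomial (Fin l ⊕ Fin r) K) ≃+*
        FractionRing (MvPolynomial (Fin l ⊕ Fin r) K) :=
      IsFractionRing.ringEquivOfRingEquiv (ΦE (r := r) t).toRingEquiv with hσdef
    have hσ : ∀ x, σ (f x) = f (Φ t x) := fun x =>
      IsFractionRing.ringEquivOfRingEquiv_algebraMap _ x
    have hC : ∀ c : K, σ (f (C c)) = f (C c) := by
      intro c
      rw [hσ]
      congr 1
      simp [Φ, algebraMap_eq]
    have hXl : ∀ j : Fin l, σ (f (X (Sum.inl j))) = f (C (t j : K) * X (Sum.inl j)) := by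
      intro j
      rw [hσ, Φ_X]
      rfl
    have hXr : ∀ j : Fin r, σ (f (X (Sum.inr j))) = f (X (Sum.inr j)) := by
      intro j
      rw [hσ, Φ_X]
      norm_num [cf]
    have hF := h t σ hC hXl hXr
    have e3 : σ F * σ (f b) = σ (f a) := by rw [← map_mul, hab]
    rw [hσ, hσ] at e3
    apply finj
    simp only [map_mul]
    rw [← e3, hF, ← hab]
    ring
  -- decomposition into multihomogeneous components
  set δ : Fin l →₀ ℕ := Finsupp.single i 1 with hδdef
  have embinj : Function.Injective (fun e : Fin l →₀ ℕ => e + δ) := by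
    intro e e' hee'
    have h1 := congrArg (fun x => x - δ) hee'
    simpa using h1
  set Sa := (sumAlgEquiv K (Fin l) (Fin r) a).support with hSadef
  set Sb := (sumAlgEquiv K (Fin l) (Fin r) (b : MvPolynomial (Fin l ⊕ Fin r) K)).support
    with hSbdef
  set S : Finset (Fin l →₀ ℕ) := Sa ∪ Sb.map ⟨fun e => e + δ, embinj⟩ with hSdef
  set v : (Fin l →₀ ℕ) → MvPolynomial (Fin l ⊕ Fin r) K :=
    fun d => if 0 < d i then a * comp' (d - δ) (b : MvPolynomial (Fin l ⊕ Fin r) K) else 0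
    with hvdef
  have sumident : ∀ t : Fin l → Kˣ,
      ∑ d ∈ S, (C (w t d) : MvPolynomial (Fin l ⊕ Fin r) K) * (comp' d a * b)
      = ∑ d ∈ S, C (w t d) * v d := by
    intro t
    have hA : ∑ d ∈ S, (C (w t d) : MvPolynomial (Fin l ⊕ Fin r) K) * (comp' d a * b)
        = Φ t a * b := by
      have h1 : Φ t a = ∑ d ∈ S, C (w t d) * comp' d a := by
        conv_lhs => rw [← comp'_sum a S Finset.subset_union_left]
        rw [map_sum]
        exact Finset.sum_congr rfl fun d _ => Φ_comp' t d a
      rw [h1, Finset.sum_mul]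
      exact Finset.sum_congr rfl fun d _ => by ring
    have hB : ∑ d ∈ S, (C (w t d) : MvPolynomial (Fin l ⊕ Fin r) K) * v d
        = C ((t i : K)) * (a * Φ t b) := by
      have h1 : Φ t (b : MvPolynomial (Fin l ⊕ Fin r) K)
          = ∑ e ∈ Sb, C (w t e) * comp' e (b : MvPolynomial (Fin l ⊕ Fin r) K) := by
        conv_lhs => rw [← comp'_sum (b : MvPolynomial (Fin l ⊕ Fin r) K) Sb (subset_refl _)]
        rw [map_sum]
        exact Finset.sum_congr rfl fun d _ => Φ_comp' t d _
      have h2 : C ((t i : K)) * ((a : MvPolynomial (Fin l ⊕ Fin r) K) * Φ t b)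
          = ∑ e ∈ Sb, C (w t (e + δ)) * (a * comp' e (b : MvPolynomial (Fin l ⊕ Fin r) K)) := by
        rw [h1, Finset.mul_sum, Finset.mul_sum]
        refine Finset.sum_congr rfl fun e _ => ?_
        rw [w_add, hδdef, w_single, map_mul]
        ring
      have h3 : ∑ e ∈ Sb, (C (w t (e + δ)) : MvPolynomial (Fin l ⊕ Fin r) K)
            * (a * comp' e (b : MvPolynomial (Fin l ⊕ Fin r) K))
          = ∑ d ∈ Sb.map ⟨fun e => e + δ, embinj⟩, C (w t d) * v d := by
        rw [Finset.sum_map]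
        refine Finset.sum_congr rfl fun e he => ?_
        simp only [Function.Embedding.coeFn_mk, hvdef]
        rw [if_pos, add_tsub_cancel_right]
        rw [Finsupp.add_apply, hδdef, Finsupp.single_eq_same]
        omega
      have h4 : ∑ d ∈ Sb.map ⟨fun e => e + δ, embinj⟩,
            (C (w t d) : MvPolynomial (Fin l ⊕ Fin r) K) * v d
          = ∑ d ∈ S, C (w t d) * v d := by
        refine Finset.sum_subset Finset.subset_union_right fun d hdS hdm => ?_
        have hv0 : v d = 0 := by
          simp only [hvdef]
          by_cases hdi : 0 < d i
          · rw [if_pos hdi]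
            have hnot : d - δ ∉ Sb := by
              intro hmem
              refine hdm (Finset.mem_map.mpr ⟨d - δ, hmem, ?_⟩)
              simp only [Function.Embedding.coeFn_mk]
              refine tsub_add_cancel_of_le ?_
              rw [hδdef]
              exact Finsupp.single_le_iff.mpr hdi
            rw [comp'_eq_zero hnot, mul_zero]
          · rw [if_neg hdi]
        rw [hv0, mul_zero]
      rw [h2, h3, h4]
    rw [hA, hB, key t]
  -- extract coefficients via linear independence of characters
  have hzero : ∀ d ∈ S, f (comp' d a * b) - f (v d) = 0 := by
    refine extract (f.comp (C : K →+* MvPolynomial (Fin l ⊕ Fin r) K)) S _ (fun t => ?_)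
    have h0 := congrArg f (sumident t)
    simp only [map_sum, map_mul] at h0
    simp only [RingHom.comp_apply]
    calc ∑ d ∈ S, (f (comp' d a * b) - f (v d)) * f (C (w t d))
        = ∑ d ∈ S, (f (C (w t d)) * (f (comp' d a) * f b) - f (C (w t d)) * f (v d)) := by
          refine Finset.sum_congr rfl fun d _ => ?_
          rw [map_mul]
          ring
      _ = 0 := by rw [Finset.sum_sub_distrib, h0, sub_self]
  -- pick a nonzero component of b
  have hEb : sumAlgEquiv K (Fin l) (Fin r) (b : MvPolynomial (Fin l ⊕ Fin r) K) ≠ 0 := by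
    intro h0
    exact hb0 ((sumAlgEquiv K (Fin l) (Fin r)).injective (by rw [h0, map_zero]))
  obtain ⟨e0, he0⟩ : Sb.Nonempty := by
    rw [hSbdef, Finset.nonempty_iff_ne_empty]
    intro h0
    exact hEb (support_eq_empty.mp h0)
  have hd0 : e0 + δ ∈ S :=
    Finset.mem_union_right _ (Finset.mem_map.mpr ⟨e0, he0, rfl⟩)
  have heq : comp' (e0 + δ) a * (b : MvPolynomial (Fin l ⊕ Fin r) K)
      = a * comp' e0 (b : MvPolynomial (Fin l ⊕ Fin r) K) := by
    apply finj
    have h5 := sub_eq_zero.mp (hzero _ hd0)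
    rw [h5]
    simp only [hvdef]
    have hpos : 0 < (e0 + δ) i := by
      rw [Finsupp.add_apply, hδdef, Finsupp.single_eq_same]; omega
    rw [if_pos hpos, add_tsub_cancel_right]
  -- final manipulation in the fraction field
  have hbL : f b ≠ 0 := fun h0 => hb0 (finj (by rw [h0, map_zero]))
  have hMain : F * f (comp' e0 (b : MvPolynomial (Fin l ⊕ Fin r) K))
      = f (comp' (e0 + δ) a) := by
    apply mul_right_cancel₀ hbL
    calc F * f (comp' e0 (b : MvPolynomial (Fin l ⊕ Fin r) K)) * f b
        = (F * f b) * f (comp' e0 (b : MvPolynomial (Fin l ⊕ Fin r) K)) := by ring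
      _ = f a * f (comp' e0 (b : MvPolynomial (Fin l ⊕ Fin r) K)) := by rw [hab]
      _ = f (a * comp' e0 (b : MvPolynomial (Fin l ⊕ Fin r) K)) := by rw [map_mul]
      _ = f (comp' (e0 + δ) a * b) := by rw [heq]
      _ = f (comp' (e0 + δ) a) * f b := by rw [map_mul]
  refine ⟨coeff (e0 + δ) (sumAlgEquiv K (Fin l) (Fin r) a),
    coeff e0 (sumAlgEquiv K (Fin l) (Fin r) (b : MvPolynomial (Fin l ⊕ Fin r) K)),
    mem_support_iff.mp he0, ?_⟩
  set M : MvPolynomial (Fin l ⊕ Fin r) K := monomial (e0.mapDomain Sum.inl) 1 with hMdef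
  have hM0 : f M ≠ 0 := by
    intro h0
    have : M = 0 := finj (by rw [h0, map_zero])
    rw [hMdef, monomial_eq_zero] at this
    exact one_ne_zero this
  apply mul_right_cancel₀ hM0
  have hcompb : comp' e0 (b : MvPolynomial (Fin l ⊕ Fin r) K)
      = rename Sum.inr (coeff e0 (sumAlgEquiv K (Fin l) (Fin r)
          (b : MvPolynomial (Fin l ⊕ Fin r) K))) * M := rfl
  have hcompa : comp' (e0 + δ) a
      = rename Sum.inr (coeff (e0 + δ) (sumAlgEquiv K (Fin l) (Fin r) a))
        * X (Sum.inl i) * M := by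
    rw [comp', hMdef]
    have hm : (e0 + δ).mapDomain (Sum.inl : Fin l → Fin l ⊕ Fin r)
        = e0.mapDomain Sum.inl + Finsupp.single ((Sum.inl i : Fin l ⊕ Fin r)) 1 := by
      rw [Finsupp.mapDomain_add, hδdef, Finsupp.mapDomain_single]
    rw [hm, monomial_add_single, pow_one]
    ring
  calc f (rename Sum.inr (coeff e0 (sumAlgEquiv K (Fin l) (Fin r)
          (b : MvPolynomial (Fin l ⊕ Fin r) K)))) * F * f M
      = F * f (comp' e0 (b : MvPolynomial (Fin l ⊕ Fin r) K)) := by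
        rw [hcompb, map_mul]; ring
    _ = f (comp' (e0 + δ) a) := hMain
    _ = f (rename Sum.inr (coeff (e0 + δ) (sumAlgEquiv K (Fin l) (Fin r) a))
          * X (Sum.inl i)) * f M := by rw [hcompa, map_mul]
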